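/- The second Foley–Sammon direction d₂ = (S_W⁻¹ − (s_bᵀ (S_W⁻¹)² s_b)/(s_bᵀ (S_W⁻¹)³ s_b) · (S_W⁻¹)²) s_b is orthogonal to d₁ = S_W⁻¹ s_b. -/

import Mathlib

open Matrix

theorem foley_sammon_second_direction_orthogonal (M : ℕ)
    (S_W : Matrix (Fin M) (Fin M) ℝ) (hW : S_W.PosDef)
    (s_b : Fin M → ℝ) (hs : s_b ≠ 0) :
    (S_W⁻¹.mulVec s_b) ⬝ᵥ
      (((S_W⁻¹ -
          ((s_b ⬝ᵥ (S_W⁻¹ * S_W⁻¹).mulVec s_b) /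
              (s_b ⬝ᵥ (S_W⁻¹ * S_W⁻¹ * S_W⁻¹).mulVec s_b)) •
            (S_W⁻¹ * S_W⁻¹))).mulVec s_b) = 0 := by
  set A := S_W⁻¹ with hAdef
  have hA : A.PosDef := hW.inv
  have hsym : Aᵀ = A := hA.isHermitian.eq
  have hdot : ∀ B : Matrix (Fin M) (Fin M) ℝ,
      (A.mulVec s_b) ⬝ᵥ (B.mulVec s_b) = s_b ⬝ᵥ ((A * B).mulVec s_b) := by
    intro B
    conv_rhs => rw [← mulVec_mulVec]
    rw [dotProduct_mulVec s_b, ← mulVec_transpose, hsym]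
  have hw : A.mulVec s_b ≠ 0 := by
    intro h
    apply hs
    have : A⁻¹.mulVec (A.mulVec s_b) = A⁻¹.mulVec 0 := by rw [h]
    rwa [mulVec_mulVec, nonsing_inv_mul A (isUnit_iff_ne_zero.2 hA.det_pos.ne'),
      one_mulVec, mulVec_zero] at this
  have hden : 0 < s_b ⬝ᵥ ((A * A * A).mulVec s_b) := by
    have h2 := hA.dotProduct_mulVec_pos hw
    simp only [star_trivial] at h2
    rw [mulVec_mulVec, hdot, ← mul_assoc] at h2
    exact h2
  rw [sub_mulVec, dotProduct_sub, smul_mulVec, dotProduct_smul, hdot, hdot,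
    ← mul_assoc]
  rw [smul_eq_mul]
  field_simp
  simp
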